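/- Under the transversal model of the query tree, if each tuple t of the database is assigned to exactly one node q(t) ∈ T (the unique transversal node returning t), then for any f : D → ℝ, choosing a leaf ℓ uniformly at random and letting q(ℓ) be its unique ancestor in T, the estimator (∑_{t : q(t) = q(ℓ)} f(t))/p(q(ℓ)) has expectation ∑_{t∈D} f(t). -/
import Mathlib


open Finset

/-- Unbiasedness of drill-down estimation in the transversal model of the query tree.
Leaves are `∀ i : Fin m, U i`; nodes are pairs `(level, representative leaf)`; `T` is a
transversal, `anc ℓ` the unique node of `T` through which leaf `ℓ` passes, each tuple
`t` of the database `D` is assigned to a node `asg t ∈ T`, and `p q` is the fraction of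
leaves passing through `q`.  Choosing a leaf uniformly at random, the estimator
`(∑_{t : asg t = anc ℓ} f t) / p (anc ℓ)` has expectation `∑_{t ∈ D} f t`. -/
theorem stmt_16 (m : ℕ) (U : Fin m → Type) [∀ i, Fintype (U i)] [∀ i, Nonempty (U i)]
    [∀ i, DecidableEq (U i)]
    (D : Type*) [Fintype D]
    (T : Finset (ℕ × (∀ i : Fin m, U i)))
    (hlevel : ∀ q ∈ T, q.1 ≤ m)
    (anc : (∀ i : Fin m, U i) → ℕ × (∀ i : Fin m, U i))
    (hancT : ∀ ℓ, anc ℓ ∈ T)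
    (hancA : ∀ ℓ, ∀ j : Fin m, (j : ℕ) < (anc ℓ).1 → ℓ j = (anc ℓ).2 j)
    (huniq : ∀ ℓ, ∀ q ∈ T, (∀ j : Fin m, (j : ℕ) < q.1 → ℓ j = q.2 j) → q = anc ℓ)
    (asg : D → ℕ × (∀ i : Fin m, U i)) (hasg : ∀ t, asg t ∈ T)
    (f : D → ℝ) :
    (∑ ℓ : ∀ i : Fin m, U i,
        (∑ t ∈ Finset.univ.filter (fun t => asg t = anc ℓ), f t) /
          (((Finset.univ.filter
              (fun ℓ' : ∀ i : Fin m, U i =>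
                ∀ j : Fin m, (j : ℕ) < (anc ℓ).1 → ℓ' j = (anc ℓ).2 j)).card : ℝ) /
            (Fintype.card (∀ i : Fin m, U i) : ℝ))) /
      (Fintype.card (∀ i : Fin m, U i) : ℝ)
    = ∑ t, f t := by
  classical
  set N : ℝ := (Fintype.card (∀ i : Fin m, U i) : ℝ) with hNdef
  have hNpos : 0 < N := by
    have := Fintype.card_pos (α := ∀ i : Fin m, U i)
    exact Nat.cast_pos.mpr this
  have hfib : ∀ ℓ : ∀ i : Fin m, U i,
      (Finset.univ.filter (fun ℓ' : ∀ i : Fin m, U i =>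
        ∀ j : Fin m, (j : ℕ) < (anc ℓ).1 → ℓ' j = (anc ℓ).2 j))
      = Finset.univ.filter (fun ℓ' => anc ℓ' = anc ℓ) := by
    intro ℓ
    ext ℓ'
    simp only [mem_filter, mem_univ, true_and]
    constructor
    · intro h
      exact (huniq ℓ' _ (hancT ℓ) h).symm
    · intro h j hj
      rw [← h] at hj ⊢
      exact hancA ℓ' j hj
  have hbody : ∀ ℓ : ∀ i : Fin m, U i,
      (∑ t ∈ Finset.univ.filter (fun t => asg t = anc ℓ), f t) /
          (((Finset.univ.filter
              (fun ℓ' : ∀ i : Fin m, U i =>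
                ∀ j : Fin m, (j : ℕ) < (anc ℓ).1 → ℓ' j = (anc ℓ).2 j)).card : ℝ) /
            (Fintype.card (∀ i : Fin m, U i) : ℝ))
      = (fun q => (∑ t ∈ Finset.univ.filter (fun t => asg t = q), f t) /
          (((Finset.univ.filter (fun ℓ' => anc ℓ' = q)).card : ℝ) / N)) (anc ℓ) := by
    intro ℓ
    rw [hfib ℓ]
  have hcomp := Finset.sum_comp (s := (Finset.univ : Finset (∀ i : Fin m, U i)))
    (fun q => (∑ t ∈ Finset.univ.filter (fun t => asg t = q), f t) /
      (((Finset.univ.filter (fun ℓ' => anc ℓ' = q)).card : ℝ) / N)) anc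
  conv_lhs => rw [funext hbody, hcomp]
  have hcard : ∀ q ∈ Finset.univ.image anc,
      (Finset.univ.filter (fun ℓ' : ∀ i : Fin m, U i => anc ℓ' = q)).card ≠ 0 := by
    intro q hq
    obtain ⟨ℓ, -, rfl⟩ := Finset.mem_image.mp hq
    refine Finset.card_ne_zero_of_mem (Finset.mem_filter.mpr ⟨Finset.mem_univ ℓ, rfl⟩)
  have hterm : ∀ q ∈ Finset.univ.image anc,
      (Finset.univ.filter (fun ℓ' : ∀ i : Fin m, U i => anc ℓ' = q)).card •
        ((∑ t ∈ Finset.univ.filter (fun t => asg t = q), f t) /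
          (((Finset.univ.filter (fun ℓ' => anc ℓ' = q)).card : ℝ) / N))
      = (∑ t ∈ Finset.univ.filter (fun t => asg t = q), f t) * N := by
    intro q hq
    have hc : ((Finset.univ.filter (fun ℓ' : ∀ i : Fin m, U i => anc ℓ' = q)).card : ℝ) ≠ 0 := by
      exact_mod_cast hcard q hq
    rw [nsmul_eq_mul]
    field_simp
  conv_lhs => rw [Finset.sum_congr rfl hterm, ← Finset.sum_mul]
  have hN' : N ≠ 0 := ne_of_gt hNpos
  rw [mul_div_assoc, div_self hN', mul_one]
  have hmaps : ∀ t ∈ (Finset.univ : Finset D), asg t ∈ Finset.univ.image anc := by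
    intro t _
    have : asg t = anc ((asg t).2) :=
      huniq ((asg t).2) (asg t) (hasg t) (fun j _ => rfl)
    exact Finset.mem_image.mpr ⟨(asg t).2, Finset.mem_univ _, this.symm⟩
  exact Finset.sum_fiberwise_of_maps_to hmaps f
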